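/- Deterministic adversarial guarantee for the Mirror Descent Algorithm (finite-horizon form of Proposition 2(2)): let α ≥ 1 satisfy g_t(x)_j ≤ α ρ_j for all t ∈ {1,…,T}, all x ∈ X_t and all j; let ρ̲ = min_j ρ_j, ρ̄ = max_j ρ_j, let ḡ ≥ 0 satisfy ‖g_t(x)‖_∞ ≤ ḡ for all t and x ∈ X_t, let e_j denote the j-th standard basis vector of ℝ^m, and let η > 0. Suppose sequences (μ_t)_{t=1}^{T+1} in {μ ∈ ℝ^m : μ ≥ 0}, (x_t)_{t=1}^{T}, and (G_t)_{t=1}^{T+1} in ℝ^m satisfy: G_1 = Tρ; for each t, x_t ∈ X_t, g_t(x_t) ≤ G_t componentwise, and r_t(x_t) − μ_t·g_t(x_t) ≥ r_t(x) − μ_t·g_t(x) for every x ∈ X_t with g_t(x) ≤ G_t componentwise; G_{t+1} = G_t − g_t(x_t); and μ_{t+1} minimizes μ ↦ (ρ − g_t(x_t))·μ + (1/η)·V_h(μ, μ_t) over {μ ∈ ℝ^m : μ ≥ 0}. Then OPT − α·Σ_{t=1}^{T} r_t(x_t) ≤ r̄ḡ/ρ̲ + α·( (ḡ + ρ̄)²·η·T/(2σ)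 + (1/η)·max{ V_h(μ, μ_1) : μ ∈ {0} ∪ { (r̄/(α ρ_j))·e_j : j ∈ {1,…,m} } } ). -/

import Mathlib

open Finset Filter

lemma slope_nonneg (φ : ℝ → ℝ) (D : ℝ) (hD : HasDerivAt φ D 0)
    (h0 : φ 0 = 0) (hpos : ∀ l ∈ Set.Ioc (0:ℝ) 1, 0 ≤ φ l) : 0 ≤ D := by
  rw [hasDerivAt_iff_tendsto_slope] at hD
  have h2 : Tendsto (slope φ 0) (nhdsWithin 0 (Set.Ioi 0)) (nhds D) :=
    hD.mono_left (nhdsWithin_mono 0 (fun x hx => ne_of_gt hx))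
  refine ge_of_tendsto h2 ?_
  filter_upwards [Ioc_mem_nhdsGT_of_mem (by constructor <;> norm_num : (0:ℝ) ∈ Set.Ico 0 1)]
    with l hl
  rw [slope_def_field, h0]
  have : 0 ≤ φ l := hpos l hl
  have hl0 : (0:ℝ) < l := hl.1
  rw [div_nonneg_iff]
  left
  constructor <;> [linarith; linarith]

lemma line_deriv {m : ℕ} (h : (Fin m → ℝ) → ℝ) (h' : (Fin m → ℝ) → (Fin m → ℝ))
    (hdiff : ∀ v, HasFDerivAt h
      (∑ j, h' v j • (ContinuousLinearMap.proj j : (Fin m → ℝ) →L[ℝ] ℝ)) v)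
    (p v : Fin m → ℝ) :
    HasDerivAt (fun l : ℝ => h (p + l • v)) (∑ j, h' p j * v j) 0 := by
  have h1 : HasDerivAt (fun l : ℝ => p + l • v) v 0 := by
    simpa using ((hasDerivAt_id (0:ℝ)).smul_const v).const_add p
  have h2 : HasFDerivAt h
      (∑ j, h' p j • (ContinuousLinearMap.proj j : (Fin m → ℝ) →L[ℝ] ℝ))
      (p + (0:ℝ) • v) := by simpa using hdiff p
  have h3 := h2.comp_hasDerivAt 0 h1
  refine h3.congr_deriv ?_
  simp [ContinuousLinearMap.sum_apply, ContinuousLinearMap.smul_apply]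

lemma foc_aux {m : ℕ} (h : (Fin m → ℝ) → ℝ) (h' : (Fin m → ℝ) → (Fin m → ℝ))
    (hdiff : ∀ v, HasFDerivAt h
      (∑ j, h' v j • (ContinuousLinearMap.proj j : (Fin m → ℝ) →L[ℝ] ℝ)) v)
    (η : ℝ) (hη : 0 < η) (w b p : Fin m → ℝ)
    (hp : ∀ j, 0 ≤ p j)
    (hmin : ∀ ν : Fin m → ℝ, (∀ j, 0 ≤ ν j) →
      (∑ j, w j * p j) + (1/η) * (h p - h b - ∑ j, h' b j * (p j - b j)) ≤
      (∑ j, w j * ν j) + (1/η) * (h ν - h b - ∑ j, h' b j * (ν j - b j)))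
    (ν : Fin m → ℝ) (hν : ∀ j, 0 ≤ ν j) :
    0 ≤ ∑ j, (w j + (1/η) * (h' p j - h' b j)) * (ν j - p j) := by
  classical
  set F : (Fin m → ℝ) → ℝ := fun u =>
    (∑ j, w j * u j) + (1/η) * (h u - h b - ∑ j, h' b j * (u j - b j)) with hF
  set q : Fin m → ℝ := fun j => ν j - p j with hq
  set φ : ℝ → ℝ := fun l => F (p + l • q) - F p with hφ
  have hqv : ∀ (l : ℝ) (j : Fin m), (p + l • q) j = p j + l * (ν j - p j) := by
    intro l j; simp [hq, mul_comm]
  -- derivative of φ at 0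
  have hder : HasDerivAt φ ((∑ j, w j * q j) +
      (1/η) * ((∑ j, h' p j * q j) - ∑ j, h' b j * q j)) 0 := by
    have hlin : HasDerivAt (fun l : ℝ => ∑ j, w j * (p + l • q) j) (∑ j, w j * q j) 0 := by
      have : (fun l : ℝ => ∑ j, w j * (p + l • q) j)
          = fun l : ℝ => (∑ j, w j * p j) + l * ∑ j, w j * q j := by
        funext l
        rw [Finset.mul_sum, ← Finset.sum_add_distrib]
        exact Finset.sum_congr rfl fun j _ => by rw [hqv]; ring
      rw [this]
      simpa using (hasDerivAt_mul_const (∑ j, w j * q j)).const_add (∑ j, w j * p j)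
    have hlin2 : HasDerivAt (fun l : ℝ => ∑ j, h' b j * ((p + l • q) j - b j))
        (∑ j, h' b j * q j) 0 := by
      have : (fun l : ℝ => ∑ j, h' b j * ((p + l • q) j - b j))
          = fun l : ℝ => (∑ j, h' b j * (p j - b j)) + l * ∑ j, h' b j * q j := by
        funext l
        rw [Finset.mul_sum, ← Finset.sum_add_distrib]
        exact Finset.sum_congr rfl fun j _ => by rw [hqv]; ring
      rw [this]
      simpa using (hasDerivAt_mul_const (∑ j, h' b j * q j)).const_add
        (∑ j, h' b j * (p j - b j))
    have hh := line_deriv h h' hdiff p q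
    have := (hlin.add ((((hh.sub_const (h b)).sub hlin2)).const_mul (1/η))).sub_const (F p)
    convert this using 1
    all_goals rfl
  -- positivity of φ on (0,1]
  have hpos : ∀ l ∈ Set.Ioc (0:ℝ) 1, 0 ≤ φ l := by
    intro l hl
    have hmem : ∀ j, 0 ≤ (p + l • q) j := by
      intro j
      rw [hqv]
      have : p j + l * (ν j - p j) = (1 - l) * p j + l * ν j := by ring
      rw [this]
      have h1 : 0 ≤ 1 - l := by linarith [hl.2]
      have h2 := mul_nonneg h1 (hp j)
      have h3 := mul_nonneg (le_of_lt hl.1) (hν j)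
      linarith
    have := hmin _ hmem
    simp only [hφ, hF]
    linarith [this]
  have h0 : φ 0 = 0 := by simp [hφ]
  have hD := slope_nonneg φ _ hder h0 hpos
  calc (0:ℝ) ≤ (∑ j, w j * q j) + (1/η) * ((∑ j, h' p j * q j) - ∑ j, h' b j * q j) := hD
    _ = ∑ j, (w j + (1/η) * (h' p j - h' b j)) * (ν j - p j) := by
        rw [← Finset.sum_sub_distrib, Finset.mul_sum, ← Finset.sum_add_distrib]
        exact Finset.sum_congr rfl fun j _ => by simp only [hq]; ring



open Finset

/-- Proposition 2(2), finite-horizon form: deterministic adversarial guarantee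
for the Mirror Descent Algorithm. -/
theorem stmt1
    (T m d : ℕ) (hT : 0 < T) (hm : 0 < m)
    (ρ : Fin m → ℝ) (hρ : ∀ j, 0 < ρ j)
    (rbar : ℝ) (hrbar : 0 ≤ rbar)
    (X : Fin T → Set (Fin d → ℝ))
    (r : Fin T → (Fin d → ℝ) → ℝ)
    (g : Fin T → (Fin d → ℝ) → (Fin m → ℝ))
    (hX0 : ∀ t, (0 : Fin d → ℝ) ∈ X t)
    (hr0 : ∀ t, r t 0 = 0)
    (hrpos : ∀ t, ∀ x ∈ X t, 0 ≤ r t x)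
    (hrbd : ∀ t, ∀ x ∈ X t, r t x ≤ rbar)
    (hg0 : ∀ t, g t 0 = 0)
    (hgpos : ∀ t, ∀ x ∈ X t, ∀ j, 0 ≤ g t x j)
    (OPT : ℝ)
    (hOPT : OPT = sSup { v | ∃ x : Fin T → (Fin d → ℝ),
      (∀ t, x t ∈ X t) ∧ (∀ j, ∑ t, g t (x t) j ≤ (T : ℝ) * ρ j) ∧
      v = ∑ t, r t (x t) })
    -- reference function
    (h : (Fin m → ℝ) → ℝ) (h' : (Fin m → ℝ) → (Fin m → ℝ)) (σ : ℝ) (hσ : 0 < σ)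
    (hdiff : ∀ v, HasFDerivAt h
      (∑ j, h' v j • (ContinuousLinearMap.proj j : (Fin m → ℝ) →L[ℝ] ℝ)) v)
    (hstrong : ∀ u v : Fin m → ℝ, (∀ j, 0 ≤ u j) → (∀ j, 0 ≤ v j) →
      h v + (∑ j, h' v j * (u j - v j)) + σ / 2 * (∑ j, |u j - v j|) ^ 2 ≤ h u)
    (V : (Fin m → ℝ) → (Fin m → ℝ) → ℝ)
    (hV : ∀ u v, V u v = h u - h v - ∑ j, h' v j * (u j - v j))
    -- parameters
    (α : ℝ) (hα : 1 ≤ α)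
    (hgα : ∀ t, ∀ x ∈ X t, ∀ j, g t x j ≤ α * ρ j)
    (ρlo ρhi : ℝ)
    (hρlo : IsLeast (Set.range ρ) ρlo) (hρhi : IsGreatest (Set.range ρ) ρhi)
    (ghi : ℝ) (hghi0 : 0 ≤ ghi)
    (hghi : ∀ t, ∀ x ∈ X t, ∀ j, |g t x j| ≤ ghi)
    (η : ℝ) (hη : 0 < η)
    -- the algorithm's trajectory
    (μ : Fin (T + 1) → Fin m → ℝ) (x : Fin T → (Fin d → ℝ))
    (G : Fin (T + 1) → Fin m → ℝ)
    (hμpos : ∀ s j, 0 ≤ μ s j)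
    (hG1 : ∀ j, G 0 j = (T : ℝ) * ρ j)
    (hxmem : ∀ t : Fin T, x t ∈ X t)
    (hxfeas : ∀ (t : Fin T) (j : Fin m), g t (x t) j ≤ G t.castSucc j)
    (hgreedy : ∀ t : Fin T, ∀ y ∈ X t, (∀ j, g t y j ≤ G t.castSucc j) →
      r t y - (∑ j, μ t.castSucc j * g t y j) ≤
        r t (x t) - ∑ j, μ t.castSucc j * g t (x t) j)
    (hGupd : ∀ (t : Fin T) (j : Fin m), G t.succ j = G t.castSucc j - g t (x t) j)
    (hMD : ∀ t : Fin T, ∀ ν : Fin m → ℝ, (∀ j, 0 ≤ ν j) →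
      (∑ j, (ρ j - g t (x t) j) * μ t.succ j) + (1 / η) * V (μ t.succ) (μ t.castSucc) ≤
        (∑ j, (ρ j - g t (x t) j) * ν j) + (1 / η) * V ν (μ t.castSucc))
    (Vmax : ℝ)
    (hVmax : IsGreatest ((fun ν => V ν (μ 0)) ''
      (insert (0 : Fin m → ℝ)
        (Set.range fun j => Pi.single j (rbar / (α * ρ j))))) Vmax) :
    OPT - α * ∑ t, r t (x t) ≤
      rbar * ghi / ρlo +
        α * ((ghi + ρhi) ^ 2 * η * T / (2 * σ) + (1 / η) * Vmax) := by
  classical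
  have hα0 : (0:ℝ) < α := lt_of_lt_of_le one_pos hα
  obtain ⟨jlo, hjlo⟩ := hρlo.1
  have hρlo0 : 0 < ρlo := hjlo ▸ hρ jlo
  obtain ⟨jhi, hjhi⟩ := hρhi.1
  have hρhi0 : 0 ≤ ρhi := le_of_lt (hjhi ▸ hρ jhi)
  -- V is nonnegative and strongly convex
  have hVnn : ∀ u v : Fin m → ℝ, (∀ j, 0 ≤ u j) → (∀ j, 0 ≤ v j) → 0 ≤ V u v := by
    intro u v hu hv
    have h1 := hstrong u v hu hv
    have h2 : 0 ≤ σ/2 * (∑ j, |u j - v j|)^2 := by positivity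
    rw [hV]; linarith
  have hVsc : ∀ u v : Fin m → ℝ, (∀ j, 0 ≤ u j) → (∀ j, 0 ≤ v j) →
      σ/2 * (∑ j, |u j - v j|)^2 ≤ V u v := by
    intro u v hu hv
    rw [hV]; linarith [hstrong u v hu hv]
  set K : ℝ := ghi + ρhi with hKdef
  have hK0 : 0 ≤ K := by rw [hKdef]; linarith
  have hwbd : ∀ (t : Fin T) (j : Fin m), |ρ j - g t (x t) j| ≤ K := by
    intro t j
    have h1 := hghi t (x t) (hxmem t) j
    have h2 := hgpos t (x t) (hxmem t) j
    have h3 : ρ j ≤ ρhi := hρhi.2 ⟨j, rfl⟩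
    have h4 := hρ j
    rw [abs_le] at h1 ⊢
    constructor
    · rw [hKdef]; linarith [h1.2]
    · rw [hKdef]; linarith [h1.2]
  -- the per-step mirror descent inequality
  have step : ∀ (t : Fin T) (ν : Fin m → ℝ), (∀ j, 0 ≤ ν j) →
      ∑ j, (ρ j - g t (x t) j) * (μ t.castSucc j - ν j) ≤
        K^2 * η / (2*σ) + (1/η) * (V ν (μ t.castSucc) - V ν (μ t.succ)) := by
    intro t ν hν
    set a : Fin m → ℝ := μ t.castSucc with ha
    set b : Fin m → ℝ := μ t.succ with hb
    have hfoc := foc_aux h h' hdiff η hη (fun j => ρ j - g t (x t) j) a b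
        (hμpos _) (fun ν' hν' => by
          have := hMD t ν' hν'
          rw [hV, hV] at this
          exact this) ν hν
    have e2 : ∑ j, h' a j * (ν j - a j)
        = (∑ j, h' a j * (b j - a j)) + ∑ j, h' a j * (ν j - b j) := by
      rw [← Finset.sum_add_distrib]; exact Finset.sum_congr rfl fun j _ => by ring
    have e3 : ∑ j, (h' a j - h' b j) * (ν j - b j)
        = (∑ j, h' a j * (ν j - b j)) - ∑ j, h' b j * (ν j - b j) := by
      rw [← Finset.sum_sub_distrib]; exact Finset.sum_congr rfl fun j _ => by ring
    have h3pt : ∑ j, (h' a j - h' b j) * (ν j - b j)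
        = V ν b + V b a - V ν a := by
      rw [hV, hV, hV, e3, e2]; ring
    have e1 : (∑ j, ((fun j => ρ j - g t (x t) j) j + (1/η)*(h' b j - h' a j)) * (ν j - b j))
        = (∑ j, (ρ j - g t (x t) j) * (ν j - b j))
          - (1/η) * ∑ j, (h' a j - h' b j) * (ν j - b j) := by
      rw [Finset.mul_sum, ← Finset.sum_sub_distrib]
      exact Finset.sum_congr rfl fun j _ => by ring
    rw [e1, h3pt] at hfoc
    have hfoc2 : (1/η) * (V ν b + V b a - V ν a) ≤ ∑ j, (ρ j - g t (x t) j) * (ν j - b j) := by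
      linarith
    have e4 : ∑ j, (ρ j - g t (x t) j) * (a j - ν j)
        = (∑ j, (ρ j - g t (x t) j) * (a j - b j))
          - ∑ j, (ρ j - g t (x t) j) * (ν j - b j) := by
      rw [← Finset.sum_sub_distrib]; exact Finset.sum_congr rfl fun j _ => by ring
    set δ : ℝ := ∑ j, |a j - b j| with hδ
    have hδ0 : 0 ≤ δ := Finset.sum_nonneg fun j _ => abs_nonneg _
    have e5 : ∑ j, (ρ j - g t (x t) j) * (a j - b j) ≤ K * δ := by
      rw [hδ, Finset.mul_sum]
      apply Finset.sum_le_sum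
      intro j _
      calc (ρ j - g t (x t) j) * (a j - b j) ≤ |(ρ j - g t (x t) j) * (a j - b j)| :=
            le_abs_self _
        _ = |ρ j - g t (x t) j| * |a j - b j| := abs_mul _ _
        _ ≤ K * |a j - b j| := mul_le_mul_of_nonneg_right (hwbd t j) (abs_nonneg _)
    have e6 : σ/2 * δ^2 ≤ V b a := by
      have h6 := hVsc b a (hμpos _) (hμpos _)
      have e7 : (∑ j, |b j - a j|) = δ := by
        rw [hδ]; exact Finset.sum_congr rfl fun j _ => abs_sub_comm _ _
      rwa [e7] at h6
    rw [e4]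
    have h8 : K * δ - (1/η) * (σ/2 * δ^2) ≤ K^2 * η / (2*σ) := by
      have hσ' : σ ≠ 0 := hσ.ne'
      have hη' : η ≠ 0 := hη.ne'
      have e : K^2*η/(2*σ) + (1/η)*(σ/2*δ^2) - K*δ = (η*K - σ*δ)^2 / (2*σ*η) := by
        field_simp
        ring
      have e2 : (0:ℝ) ≤ (η*K - σ*δ)^2 / (2*σ*η) :=
        div_nonneg (sq_nonneg _) (by positivity)
      linarith [e, e2]
    have h9 : (1/η) * (σ/2*δ^2) ≤ (1/η) * V b a :=
      mul_le_mul_of_nonneg_left e6 (by positivity)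
    have c2 : (1/η) * (V ν b + V b a - V ν a)
        = (1/η) * V ν b + (1/η) * V b a - (1/η) * V ν a := by ring
    have c3 : (1/η) * (V ν a - V ν b) = (1/η) * V ν a - (1/η) * V ν b := by ring
    rw [c3]
    rw [c2] at hfoc2
    clear_value K a b δ
    linarith [e5, hfoc2, h8, h9]
  -- ℕ-indexed versions
  set gg : ℕ → Fin m → ℝ := fun n j => if hn : n < T then g ⟨n,hn⟩ (x ⟨n,hn⟩) j else 0 with hgg
  set rr : ℕ → ℝ := fun n => if hn : n < T then r ⟨n,hn⟩ (x ⟨n,hn⟩) else 0 with hrr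
  set mu : ℕ → Fin m → ℝ := fun n => if hn : n < T + 1 then μ ⟨n,hn⟩ else 0 with hmu
  -- regret bound of mirror descent
  have regret : ∀ (ν : Fin m → ℝ), (∀ j, 0 ≤ ν j) → ∀ N, N ≤ T →
      ∑ n ∈ Finset.range N, (∑ j, (ρ j - gg n j) * (mu n j - ν j))
        ≤ K^2 * η * N / (2*σ) + (1/η) * (V ν (mu 0) - V ν (mu N)) := by
    intro ν hν N
    induction N with
    | zero => intro _; simp
    | succ N ih =>
      intro hN1
      have hNT : N < T := hN1
      have IH := ih (le_of_lt hNT)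
      rw [Finset.sum_range_succ]
      have e2 : mu N = μ (⟨N, hNT⟩ : Fin T).castSucc := by
        simp only [hmu]
        rw [dif_pos (Nat.lt_succ_of_lt hNT)]
        exact congrArg μ (Fin.ext (by simp))
      have e3 : mu (N+1) = μ (⟨N, hNT⟩ : Fin T).succ := by
        simp only [hmu]
        rw [dif_pos (Nat.succ_lt_succ hNT)]
        rfl
      have e4 : (∑ j, (ρ j - gg N j) * (mu N j - ν j))
          = ∑ j, (ρ j - g (⟨N, hNT⟩ : Fin T) (x ⟨N, hNT⟩) j) *
              (μ (⟨N, hNT⟩ : Fin T).castSucc j - ν j) := by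
        rw [e2]
        refine Finset.sum_congr rfl fun j _ => ?_
        simp only [hgg]
        rw [dif_pos hNT]
      have hstep := step ⟨N, hNT⟩ ν hν
      rw [e4, e3]
      rw [e2] at IH
      have e5 : K^2*η*((N:ℝ)+1)/(2*σ) = K^2*η*(N:ℝ)/(2*σ) + K^2*η/(2*σ) := by ring
      have e6 : (1/η)*(V ν (mu 0) - V ν (μ (⟨N, hNT⟩ : Fin T).castSucc))
            + (1/η)*(V ν (μ (⟨N, hNT⟩ : Fin T).castSucc) - V ν (μ (⟨N, hNT⟩ : Fin T).succ))
          = (1/η)*(V ν (mu 0) - V ν (μ (⟨N, hNT⟩ : Fin T).succ)) := by ring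
      push_cast
      linarith [hstep, IH, e5, e6]
  -- budget identity
  have budget : ∀ N, ∀ (hN : N < T + 1) (j : Fin m),
      G ⟨N, hN⟩ j = (T:ℝ) * ρ j - ∑ n ∈ Finset.range N, gg n j := by
    intro N
    induction N with
    | zero =>
      intro hN j
      have e : (⟨0, hN⟩ : Fin (T+1)) = 0 := Fin.ext (by simp)
      rw [e, hG1]
      simp
    | succ N ih =>
      intro hN j
      have hNT : N < T := Nat.lt_of_succ_lt_succ hN
      have e1 : (⟨N+1, hN⟩ : Fin (T+1)) = (⟨N, hNT⟩ : Fin T).succ := rfl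
      have e2 : (⟨N, Nat.lt_succ_of_lt hNT⟩ : Fin (T+1)) = (⟨N, hNT⟩ : Fin T).castSucc := rfl
      rw [e1, hGupd ⟨N, hNT⟩ j, Finset.sum_range_succ, ← e2,
        ih (Nat.lt_succ_of_lt hNT) j]
      have e3 : gg N j = g (⟨N, hNT⟩ : Fin T) (x ⟨N, hNT⟩) j := by
        simp only [hgg]; rw [dif_pos hNT]
      rw [e3]; ring
  -- per-period comparison with the greedy action
  have keyIneq : ∀ (t : Fin T) (y : Fin d → ℝ), y ∈ X t → (∀ j, g t y j ≤ G t.castSucc j) →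
      r t y ≤ α * r t (x t) + α * ∑ j, (ρ j - g t (x t) j) * μ t.castSucc j := by
    intro t y hy hyfeas
    have h1 := hgreedy t y hy hyfeas
    have h0feas : ∀ j, g t 0 j ≤ G t.castSucc j := fun j => by
      have e : g t 0 j = 0 := by rw [hg0]; rfl
      rw [e]
      exact le_trans (hgpos t (x t) (hxmem t) j) (hxfeas t j)
    have h2' := hgreedy t 0 (hX0 t) h0feas
    have h2 : ∑ j, μ t.castSucc j * g t (x t) j ≤ r t (x t) := by
      have e : ∑ j, μ t.castSucc j * g t 0 j = 0 := by
        apply Finset.sum_eq_zero; intro j _; rw [hg0]; simp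
      rw [hr0, e] at h2'
      linarith
    have h3 : ∑ j, μ t.castSucc j * g t y j ≤ α * ∑ j, μ t.castSucc j * ρ j := by
      rw [Finset.mul_sum]
      apply Finset.sum_le_sum
      intro j _
      calc μ t.castSucc j * g t y j ≤ μ t.castSucc j * (α * ρ j) :=
            mul_le_mul_of_nonneg_left (hgα t y hy j) (hμpos _ j)
        _ = α * (μ t.castSucc j * ρ j) := by ring
    have e : ∑ j, (ρ j - g t (x t) j) * μ t.castSucc j
        = (∑ j, μ t.castSucc j * ρ j) - ∑ j, μ t.castSucc j * g t (x t) j := by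
      rw [← Finset.sum_sub_distrib]; exact Finset.sum_congr rfl fun j _ => by ring
    have h4 : 0 ≤ (α - 1) * (r t (x t) - ∑ j, μ t.castSucc j * g t (x t) j) :=
      mul_nonneg (by linarith) (by linarith)
    have h4' : (α - 1) * (r t (x t) - ∑ j, μ t.castSucc j * g t (x t) j)
        = α * r t (x t) - α * (∑ j, μ t.castSucc j * g t (x t) j)
          - r t (x t) + ∑ j, μ t.castSucc j * g t (x t) j := by ring
    rw [e, mul_sub]
    linarith [h1, h3, h4, h4']
  -- reduce to bounding each feasible value
  rw [hOPT, sub_le_iff_le_add]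
  have sum_r : ∑ t, r t (x t) = ∑ n ∈ Finset.range T, rr n := by
    rw [← Fin.sum_univ_eq_sum_range]
    refine Finset.sum_congr rfl fun t _ => ?_
    simp only [hrr]
    rw [dif_pos t.isLt]
  refine csSup_le ⟨_, ⟨fun _ => 0, fun t => hX0 t, fun j => ?_, rfl⟩⟩ ?_
  · simp only [hg0, Pi.zero_apply, Finset.sum_const_zero]
    exact mul_nonneg (Nat.cast_nonneg T) (le_of_lt (hρ j))
  intro v hv
  obtain ⟨xs, hxsmem, hxsfeas, rfl⟩ := hv
  set rs : ℕ → ℝ := fun n => if hn : n < T then r ⟨n,hn⟩ (xs ⟨n,hn⟩) else 0 with hrs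
  have sum_rs : ∑ t, r t (xs t) = ∑ n ∈ Finset.range T, rs n := by
    rw [← Fin.sum_univ_eq_sum_range]
    refine Finset.sum_congr rfl fun t _ => ?_
    simp only [hrs]
    rw [dif_pos t.isLt]
  have hrs_bd : ∀ n, rs n ≤ rbar := fun n => by
    simp only [hrs]; split
    · exact hrbd _ _ (hxsmem _)
    · exact hrbar
  have hrr_nn : ∀ n, 0 ≤ rr n := fun n => by
    simp only [hrr]; split
    · exact hrpos _ _ (hxmem _)
    · exact le_refl 0
  have hmu0 : mu 0 = μ 0 := by
    simp only [hmu]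
    rw [dif_pos (Nat.succ_pos T)]
    exact congrArg μ (Fin.ext (by simp))
  have hconst0 : K^2 * η * (T:ℝ) / (2*σ) = (ghi + ρhi)^2 * η * (T:ℝ) / (2*σ) := by rw [hKdef]
  rw [sum_rs, sum_r, ← hconst0]
  by_cases hdep : ∃ n, ∃ hn : n < T, ∃ j, G (⟨n, hn⟩ : Fin T).castSucc j < ghi
  · -- some resource nearly depleted at time τ
    have τspec := Nat.find_spec hdep
    set τ := Nat.find hdep with hτdef
    obtain ⟨hτT, j₀, hj₀⟩ := τspec
    have hτle : τ ≤ T := le_of_lt hτT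
    have hbig : ∀ (n : ℕ) (hn : n < τ) (j : Fin m),
        ghi ≤ G (⟨n, lt_trans hn hτT⟩ : Fin T).castSucc j := by
      intro n hn j
      by_contra hlt
      push_neg at hlt
      exact Nat.find_min hdep hn ⟨lt_trans hn hτT, j, hlt⟩
    set c : ℝ := rbar / (α * ρ j₀) with hc
    have hc0 : 0 ≤ c := div_nonneg hrbar (le_of_lt (mul_pos hα0 (hρ j₀)))
    set νc : Fin m → ℝ := Pi.single j₀ c with hνc
    have hνc_nn : ∀ j, 0 ≤ νc j := fun j => by
      simp only [hνc]
      rcases eq_or_ne j j₀ with hj | hj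
      · rw [hj, Pi.single_eq_same]; exact hc0
      · rw [Pi.single_eq_of_ne hj]
    have reg := regret νc hνc_nn τ hτle
    have split_rs : ∑ n ∈ Finset.range T, rs n
        = (∑ n ∈ Finset.range τ, rs n) + ∑ n ∈ Finset.Ico τ T, rs n :=
      (Finset.sum_range_add_sum_Ico _ hτle).symm
    have tail_bd : ∑ n ∈ Finset.Ico τ T, rs n ≤ ((T - τ : ℕ) : ℝ) * rbar := by
      calc ∑ n ∈ Finset.Ico τ T, rs n ≤ ∑ _n ∈ Finset.Ico τ T, rbar :=
            Finset.sum_le_sum fun n _ => hrs_bd n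
        _ = ((T - τ : ℕ) : ℝ) * rbar := by
            rw [Finset.sum_const, Nat.card_Ico, nsmul_eq_mul]
    have head_bd : ∑ n ∈ Finset.range τ, rs n
        ≤ α * (∑ n ∈ Finset.range τ, rr n)
          + α * ∑ n ∈ Finset.range τ, ∑ j, (ρ j - gg n j) * (mu n j) := by
      calc ∑ n ∈ Finset.range τ, rs n
          ≤ ∑ n ∈ Finset.range τ, (α * rr n + α * ∑ j, (ρ j - gg n j) * (mu n j)) := by
            apply Finset.sum_le_sum
            intro n hn
            have hnτ : n < τ := Finset.mem_range.mp hn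
            have hnT : n < T := lt_trans hnτ hτT
            have hfeas : ∀ j, g (⟨n, hnT⟩ : Fin T) (xs ⟨n, hnT⟩) j
                ≤ G (⟨n, hnT⟩ : Fin T).castSucc j := fun j =>
              le_trans (le_trans (le_abs_self _)
                (hghi _ _ (hxsmem ⟨n, hnT⟩) j)) (hbig n hnτ j)
            have hki := keyIneq ⟨n, hnT⟩ (xs ⟨n, hnT⟩) (hxsmem _) hfeas
            simp only [hrs, hrr, hgg, hmu, dif_pos hnT, dif_pos (Nat.lt_succ_of_lt hnT)]
            convert hki using 4
            all_goals rfl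
        _ = _ := by
            rw [Finset.sum_add_distrib, ← Finset.mul_sum, ← Finset.mul_sum]
    have expand : ∑ n ∈ Finset.range τ, ∑ j, (ρ j - gg n j) * (mu n j - νc j)
        = (∑ n ∈ Finset.range τ, ∑ j, (ρ j - gg n j) * (mu n j))
          - ∑ n ∈ Finset.range τ, ∑ j, (ρ j - gg n j) * (νc j) := by
      rw [← Finset.sum_sub_distrib]
      refine Finset.sum_congr rfl fun n _ => ?_
      rw [← Finset.sum_sub_distrib]
      exact Finset.sum_congr rfl fun j _ => by ring
    have hVc0 : V νc (mu 0) ≤ Vmax := by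
      rw [hmu0]
      exact hVmax.2 ⟨νc, Set.mem_insert_iff.mpr (Or.inr ⟨j₀, rfl⟩), rfl⟩
    have hVcτ : 0 ≤ V νc (mu τ) := by
      apply hVnn νc (mu τ) hνc_nn
      intro j
      simp only [hmu]
      rw [dif_pos (Nat.lt_succ_of_le hτle)]
      exact hμpos _ j
    have mid : ∑ n ∈ Finset.range τ, ∑ j, (ρ j - gg n j) * (mu n j)
        ≤ (∑ n ∈ Finset.range τ, ∑ j, (ρ j - gg n j) * (νc j))
          + K^2*η*(τ:ℝ)/(2*σ) + (1/η)*Vmax := by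
      rw [expand] at reg
      have h1 : (1/η) * (V νc (mu 0) - V νc (mu τ)) ≤ (1/η) * Vmax :=
        mul_le_mul_of_nonneg_left (by linarith) (by positivity)
      linarith
    have scomp : ∑ n ∈ Finset.range τ, ∑ j, (ρ j - gg n j) * (νc j)
        = c * ((τ:ℝ) * ρ j₀ - ∑ n ∈ Finset.range τ, gg n j₀) := by
      have e1 : ∀ n, ∑ j, (ρ j - gg n j) * (νc j) = (ρ j₀ - gg n j₀) * c := by
        intro n
        simp only [hνc]
        rw [Finset.sum_eq_single j₀]
        · rw [Pi.single_eq_same]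
        · intro b _ hb; rw [Pi.single_eq_of_ne hb, mul_zero]
        · intro hmem; exact absurd (Finset.mem_univ j₀) hmem
      calc ∑ n ∈ Finset.range τ, ∑ j, (ρ j - gg n j) * (νc j)
          = ∑ n ∈ Finset.range τ, (ρ j₀ - gg n j₀) * c :=
            Finset.sum_congr rfl fun n _ => e1 n
        _ = (∑ n ∈ Finset.range τ, (ρ j₀ - gg n j₀)) * c := (Finset.sum_mul _ _ _).symm
        _ = c * ((τ:ℝ) * ρ j₀ - ∑ n ∈ Finset.range τ, gg n j₀) := by
            rw [Finset.sum_sub_distrib, Finset.sum_const, Finset.card_range, nsmul_eq_mul]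
            ring
    have bspend : (T:ℝ) * ρ j₀ - ghi < ∑ n ∈ Finset.range τ, gg n j₀ := by
      have hb := budget τ (Nat.lt_succ_of_le hτle) j₀
      have e : G (⟨τ, hτT⟩ : Fin T).castSucc j₀
          = (T:ℝ) * ρ j₀ - ∑ n ∈ Finset.range τ, gg n j₀ := hb
      rw [e] at hj₀
      linarith
    have F7 : ∑ n ∈ Finset.range τ, ∑ j, (ρ j - gg n j) * (νc j)
        ≤ c * ((τ:ℝ) * ρ j₀ - (T:ℝ) * ρ j₀ + ghi) := by
      rw [scomp]
      apply mul_le_mul_of_nonneg_left _ hc0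
      linarith
    have F8 : α * (c * ((τ:ℝ) * ρ j₀ - (T:ℝ) * ρ j₀ + ghi))
        = rbar * ghi / ρ j₀ - ((T:ℝ) - (τ:ℝ)) * rbar := by
      rw [hc]
      have h1 : α ≠ 0 := ne_of_gt hα0
      have h2 : ρ j₀ ≠ 0 := ne_of_gt (hρ j₀)
      field_simp
      ring
    have hdivle : rbar * ghi / ρ j₀ ≤ rbar * ghi / ρlo :=
      div_le_div_of_nonneg_left (mul_nonneg hrbar hghi0) hρlo0 (hρlo.2 ⟨j₀, rfl⟩)
    have F6 : α * (K^2*η*(τ:ℝ)/(2*σ)) ≤ α * (K^2*η*(T:ℝ)/(2*σ)) := by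
      apply mul_le_mul_of_nonneg_left _ (le_of_lt hα0)
      gcongr
    have F4 : α * (∑ n ∈ Finset.range τ, rr n) ≤ α * ∑ n ∈ Finset.range T, rr n := by
      apply mul_le_mul_of_nonneg_left _ (le_of_lt hα0)
      apply Finset.sum_le_sum_of_subset_of_nonneg (Finset.range_subset_range.mpr hτle)
      intro n _ _
      exact hrr_nn n
    have A1 := mul_le_mul_of_nonneg_left mid (le_of_lt hα0)
    have A2 := mul_le_mul_of_nonneg_left F7 (le_of_lt hα0)
    have head_cast : ((T - τ : ℕ) : ℝ) = (T:ℝ) - (τ:ℝ) := by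
      push_cast [hτle]
      ring
    rw [head_cast] at tail_bd
    clear_value K gg rr mu rs τ c νc
    linarith [split_rs, tail_bd, head_bd, A1, A2, F6, F4, F8, hdivle]
  · -- no depletion: all budgets stay large
    push_neg at hdep
    have main1 : ∀ t : Fin T, r t (xs t)
        ≤ α * r t (x t) + α * ∑ j, (ρ j - g t (x t) j) * μ t.castSucc j := by
      intro t
      apply keyIneq t (xs t) (hxsmem t)
      intro j
      have h2 := hdep t.val t.isLt j
      calc g t (xs t) j ≤ |g t (xs t) j| := le_abs_self _
        _ ≤ ghi := hghi t (xs t) (hxsmem t) j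
        _ ≤ _ := h2
    have sum1 : ∑ n ∈ Finset.range T, rs n
        ≤ α * (∑ n ∈ Finset.range T, rr n)
          + α * ∑ n ∈ Finset.range T, ∑ j, (ρ j - gg n j) * (mu n j - (0:Fin m → ℝ) j) := by
      have e := Fin.sum_univ_eq_sum_range
        (fun n => ∑ j, (ρ j - gg n j) * (mu n j - (0:Fin m → ℝ) j)) T
      rw [← e, ← sum_r, ← sum_rs]
      calc ∑ t, r t (xs t)
          ≤ ∑ t : Fin T, (α * r t (x t)
              + α * ∑ j, (ρ j - gg t.val j) * (mu t.val j - (0:Fin m → ℝ) j)) := by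
            apply Finset.sum_le_sum
            intro t _
            have := main1 t
            have e2 : ∑ j, (ρ j - gg t.val j) * (mu t.val j - (0:Fin m → ℝ) j)
                = ∑ j, (ρ j - g t (x t) j) * μ t.castSucc j := by
              refine Finset.sum_congr rfl fun j _ => ?_
              simp only [hgg, hmu, Pi.zero_apply, sub_zero, dif_pos t.isLt,
                dif_pos (Nat.lt_succ_of_lt t.isLt)]
              congr 2
            rw [e2]
            exact this
        _ = _ := by
            rw [Finset.sum_add_distrib, ← Finset.mul_sum, ← Finset.mul_sum]
    have reg := regret 0 (fun j => le_refl 0) T (le_refl T)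
    have hV0 : V 0 (mu 0) ≤ Vmax := by
      rw [hmu0]
      exact hVmax.2 ⟨0, Set.mem_insert _ _, rfl⟩
    have hVT : 0 ≤ V 0 (mu T) := by
      apply hVnn 0 (mu T) (fun j => le_refl 0)
      intro j
      simp only [hmu]
      rw [dif_pos (Nat.lt_succ_self T)]
      exact hμpos _ j
    have final_reg : α * (∑ n ∈ Finset.range T, ∑ j, (ρ j - gg n j) * (mu n j - (0:Fin m → ℝ) j))
        ≤ α * (K^2*η*(T:ℝ)/(2*σ) + (1/η)*Vmax) := by
      apply mul_le_mul_of_nonneg_left _ (le_of_lt hα0)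
      have h1 : (1/η) * (V 0 (mu 0) - V 0 (mu T)) ≤ (1/η) * Vmax :=
        mul_le_mul_of_nonneg_left (by linarith) (by positivity)
      linarith [reg]
    have hrhs0 : 0 ≤ rbar * ghi / ρlo := by positivity
    linarith [sum1, final_reg, hrhs0]
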